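/- Let A ⊂ P^m (m ≥ 2, over ℂ) be a set of m+2 points in linearly general position. Then the common zero locus of all quadratic forms vanishing on A equals A. -/

import Mathlib

open MvPolynomial Function

/-- Complex projective `n`-space, as the projectivization of `ℂ^{n+1}`. -/
abbrev Pn (n : ℕ) := Projectivization ℂ (Fin (n + 1) → ℂ)

/-- The linear span (as a vector subspace) of a set of projective points. -/
def pspan {V : Type*} [AddCommGroup V] [Module ℂ V] (E : Set (Projectivization ℂ V)) :
    Submodule ℂ V :=
  Submodule.span ℂ (Projectivization.rep '' E)

/-- `E` minimally spans `q`: `q` lies in the span of `E` but in the span of no proper subset. -/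
def MinimallySpans {V : Type*} [AddCommGroup V] [Module ℂ V]
    (E : Set (Projectivization ℂ V)) (q : Projectivization ℂ V) : Prop :=
  q.rep ∈ pspan E ∧ ∀ E' ⊂ E, q.rep ∉ pspan E'

/-- `E ⊂ P^n` imposes `|E|` independent conditions on degree-`t` forms:
the evaluation map from `ℂ[z_0,…,z_n]_t` to `ℂ^E` is surjective. -/
def ImposesIndep (n t : ℕ) (E : Set (Pn n)) : Prop :=
  Surjective (fun (g : homogeneousSubmodule (Fin (n + 1)) ℂ t) (p : E) =>
    eval (Projectivization.rep (p : Pn n)) (g : MvPolynomial (Fin (n + 1)) ℂ))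

/-- The `d`-th power of the linear form with coefficient vector `v`. -/
noncomputable def linPow (n d : ℕ) (v : Fin (n + 1) → ℂ) : MvPolynomial (Fin (n + 1)) ℂ :=
  (∑ i, C (v i) * X i) ^ d

/-- The span of the image under the degree-`d` Veronese embedding of a set `S ⊂ P^n`,
as a subspace of the polynomial ring. -/
noncomputable def veroneseSpan (n d : ℕ) (S : Set (Pn n)) : Submodule ℂ (MvPolynomial (Fin (n + 1)) ℂ) :=
  Submodule.span ℂ ((fun p : Pn n => linPow n d (Projectivization.rep p)) '' S)

/-- `ν_d(S)` minimally spans the point `q` of `P^r = P(ℂ[z_0,…,z_n]_d)`. -/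
def MinSpansVer (n d : ℕ) (S : Set (Pn n))
    (q : Projectivization ℂ (homogeneousSubmodule (Fin (n + 1)) ℂ d)) : Prop :=
  (Projectivization.rep q).1 ∈ veroneseSpan n d S ∧
    ∀ S' ⊂ S, (Projectivization.rep q).1 ∉ veroneseSpan n d S'

/-- `S ⊂ P^m` is in linearly general position: every subset of cardinality at most `m + 1`
is linearly independent. -/
def LGP (m : ℕ) (S : Set (Pn m)) : Prop :=
  ∀ B ⊆ S, B.Finite → B.ncard ≤ m + 1 →
    LinearIndependent ℂ (fun p : B => Projectivization.rep (p : Pn m))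

/-- The evaluation linear map from degree-`t` forms to `ℂ^E`. -/
noncomputable def evalLM (n t : ℕ) (E : Set (Pn n)) :
    homogeneousSubmodule (Fin (n + 1)) ℂ t →ₗ[ℂ] (E → ℂ) where
  toFun g p := eval (Projectivization.rep (p : Pn n)) g.1
  map_add' g₁ g₂ := by funext p; simp
  map_smul' c g := by funext p; simp [MvPolynomial.smul_eval]

-- functional lemma
lemma exists_functional {n : ℕ} (W : Submodule ℂ (Fin n → ℂ)) (v : Fin n → ℂ) (hv : v ∉ W) :
    ∃ f : (Fin n → ℂ) →ₗ[ℂ] ℂ, (∀ w ∈ W, f w = 0) ∧ f v ≠ 0 := by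
  have h0 : W.mkQ v ≠ 0 := by
    simpa [Submodule.mkQ_apply, Submodule.Quotient.mk_eq_zero] using hv
  have := (Module.forall_dual_apply_eq_zero_iff ℂ (W.mkQ v)).not.2 h0
  push_neg at this
  obtain ⟨φ, hφ⟩ := this
  refine ⟨φ.comp W.mkQ, fun w hw => ?_, hφ⟩
  simp [Submodule.mkQ_apply, (Submodule.Quotient.mk_eq_zero W).2 hw]

noncomputable def linForm (n : ℕ) (f : (Fin (n + 1) → ℂ) →ₗ[ℂ] ℂ) :
    MvPolynomial (Fin (n + 1)) ℂ :=
  ∑ i, C (f fun j => if i = j then 1 else 0) * X i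

lemma linForm_isHomogeneous (n : ℕ) (f : (Fin (n + 1) → ℂ) →ₗ[ℂ] ℂ) :
    (linForm n f).IsHomogeneous 1 := by
  apply MvPolynomial.IsHomogeneous.sum
  intro i _
  simpa using (isHomogeneous_C _ _).mul (isHomogeneous_X ℂ i)

lemma eval_linForm {n : ℕ} (f : (Fin (n + 1) → ℂ) →ₗ[ℂ] ℂ) (w : Fin (n + 1) → ℂ) :
    eval w (linForm n f) = f w := by
  rw [LinearMap.pi_apply_eq_sum_univ f w, linForm]
  simp [mul_comm, smul_eq_mul]

lemma disjoint_pspan {m : ℕ} {S1 S2 : Set (Pn m)}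
    (h : LinearIndependent ℂ (fun q : ↥(S1 ∪ S2) => Projectivization.rep (q : Pn m)))
    (hd : Disjoint S1 S2) : Disjoint (pspan S1) (pspan S2) := by
  have h1 : (fun q : ↥(S1 ∪ S2) => Projectivization.rep (q : Pn m)) ''
      (Subtype.val ⁻¹' S1) = Projectivization.rep '' S1 := by
    rw [show (fun q : ↥(S1 ∪ S2) => Projectivization.rep (q : Pn m)) =
        Projectivization.rep ∘ Subtype.val from rfl, Set.image_comp,
      Subtype.image_preimage_coe, Set.inter_eq_right.2 Set.subset_union_left]
  have h2 : (fun q : ↥(S1 ∪ S2) => Projectivization.rep (q : Pn m)) ''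
      (Subtype.val ⁻¹' S2) = Projectivization.rep '' S2 := by
    rw [show (fun q : ↥(S1 ∪ S2) => Projectivization.rep (q : Pn m)) =
        Projectivization.rep ∘ Subtype.val from rfl, Set.image_comp,
      Subtype.image_preimage_coe, Set.inter_eq_right.2 Set.subset_union_right]
  have := h.disjoint_span_image (s := Subtype.val ⁻¹' S1) (t := Subtype.val ⁻¹' S2)
    (hd.preimage _)
  rwa [pspan, pspan, ← h1, ← h2]


lemma pspan_mono {m : ℕ} {S1 S2 : Set (Pn m)} (h : S1 ⊆ S2) : pspan S1 ≤ pspan S2 :=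
  Submodule.span_mono (Set.image_mono h)

lemma pspan_union {m : ℕ} (S1 S2 : Set (Pn m)) :
    pspan (S1 ∪ S2) = pspan S1 ⊔ pspan S2 := by
  rw [pspan, pspan, pspan, Set.image_union, Submodule.span_union]

lemma exists_cover (m : ℕ) (hm : 2 ≤ m) (A : Set (Pn m)) (hA : A.Finite)
    (hcard : A.ncard = m + 2) (hlgp : LGP m A) (p : Pn m) (hp : p ∉ A) :
    ∃ A1 A2 : Set (Pn m), A ⊆ A1 ∪ A2 ∧ p.rep ∉ pspan A1 ∧ p.rep ∉ pspan A2 := by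
  classical
  by_cases hcase : ∃ B ⊆ A, B.ncard ≤ m ∧ p.rep ∈ pspan B
  · -- minimal such B
    have hEx : ∃ n, ∃ B ⊆ A, B.ncard ≤ m ∧ B.ncard = n ∧ p.rep ∈ pspan B := by
      obtain ⟨B, h1, h2, h3⟩ := hcase; exact ⟨B.ncard, B, h1, h2, rfl, h3⟩
    obtain ⟨B, hBA, hBm, hBk, hBspan⟩ := Nat.find_spec hEx
    have hBfin : B.Finite := hA.subset hBA
    have hmin : ∀ B' ⊆ A, B'.ncard < B.ncard → p.rep ∉ pspan B' := by
      intro B' hB'A hB'k hsp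
      exact Nat.find_min hEx (hBk ▸ hB'k) ⟨B', hB'A, by omega, rfl, hsp⟩
    have hk2 : 2 ≤ B.ncard := by
      by_contra h
      push_neg at h
      interval_cases hn : B.ncard
      · have hBe : B = ∅ := (Set.ncard_eq_zero hBfin).1 hn
        rw [hBe] at hBspan
        simp only [pspan, Set.image_empty, Submodule.span_empty, Submodule.mem_bot] at hBspan
        exact Projectivization.rep_nonzero p hBspan
      · obtain ⟨a, rfl⟩ := Set.ncard_eq_one.1 hn
        rw [pspan, Set.image_singleton, Submodule.mem_span_singleton] at hBspan
        obtain ⟨c, hc⟩ := hBspan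
        have hpa : p = a := by
          rw [← Projectivization.mk_rep p, ← Projectivization.mk_rep a]
          exact (Projectivization.mk_eq_mk_iff' ℂ _ _ (Projectivization.rep_nonzero p)
            (Projectivization.rep_nonzero a)).2 ⟨c, hc⟩
        exact hp (hpa ▸ hBA rfl)
    obtain ⟨b1, hb1, b2, hb2, hb12⟩ := (Set.one_lt_ncard hBfin).1 (by omega)
    have hCcard : (A \ B).ncard = m + 2 - B.ncard := by
      rw [Set.ncard_diff hBA hBfin, hcard]
    obtain ⟨C1, hC1C, hC1card⟩ := Set.exists_subset_card_eq
      (s := A \ B) (n := m + 1 - B.ncard) (by omega)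
    have hCfin : (A \ B).Finite := hA.diff
    have hC1fin : C1.Finite := hCfin.subset hC1C
    have hC2card : ((A \ B) \ C1).ncard = 1 := by
      rw [Set.ncard_diff hC1C hC1fin, hCcard, hC1card]; omega
    have key : ∀ (A' : Set (Pn m)) (b : Pn m), A' ⊆ A → b ∈ B → b ∉ A' →
        B \ {b} ⊆ A' → A'.ncard ≤ m → p.rep ∉ pspan A' := by
      intro A' b hA'A hbB hbA' hBbA' hA'm hsp
      have hTA : A' ∪ {b} ⊆ A := Set.union_subset hA'A (by simpa using hBA hbB)
      have hTfin : (A' ∪ {b}).Finite := hA.subset hTA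
      have hTcard : (A' ∪ {b}).ncard ≤ m + 1 := by
        calc (A' ∪ {b}).ncard ≤ A'.ncard + ({b} : Set (Pn m)).ncard := Set.ncard_union_le _ _
        _ ≤ m + 1 := by rw [Set.ncard_singleton]; omega
      have li := hlgp _ hTA hTfin hTcard
      have hdisj := disjoint_pspan li (Set.disjoint_singleton_right.2 hbA')
      have hBsplit : (B \ {b}) ∪ {b} = B := by
        rw [Set.diff_union_self]; exact Set.union_eq_self_of_subset_right (by simpa using hbB)
      have hmem : p.rep ∈ pspan (B \ {b}) ⊔ pspan {b} := by
        rw [← pspan_union, hBsplit]; exact hBspan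
      obtain ⟨x, hxmem, y, hymem, hxy⟩ := Submodule.mem_sup.1 hmem
      have hxA' : x ∈ pspan A' := pspan_mono hBbA' hxmem
      have hyA' : y ∈ pspan A' := by
        have : y = p.rep - x := by rw [← hxy]; abel
        rw [this]; exact Submodule.sub_mem _ hsp hxA'
      have hy0 : y = 0 := Submodule.disjoint_def.1 hdisj y hyA' hymem
      have hpx : p.rep ∈ pspan (B \ {b}) := by
        rw [← hxy, hy0, add_zero]; exact hxmem
      refine hmin (B \ {b}) (Set.diff_subset.trans hBA) ?_ hpx
      rw [Set.ncard_diff (by simpa using hbB) (Set.finite_singleton b), Set.ncard_singleton]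
      omega
    refine ⟨(B \ {b1}) ∪ C1, (B \ {b2}) ∪ ((A \ B) \ C1), ?_, ?_, ?_⟩
    · intro a ha
      by_cases haB : a ∈ B
      · by_cases hab1 : a = b1
        · subst hab1
          exact Or.inr (Or.inl ⟨haB, by simpa using hb12⟩)
        · exact Or.inl (Or.inl ⟨haB, hab1⟩)
      · by_cases haC1 : a ∈ C1
        · exact Or.inl (Or.inr haC1)
        · exact Or.inr (Or.inr ⟨⟨ha, haB⟩, haC1⟩)
    · refine key _ b1 (Set.union_subset (Set.diff_subset.trans hBA)
        (hC1C.trans Set.diff_subset)) hb1 ?_ Set.subset_union_left ?_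
      · rintro (h | h)
        · exact h.2 rfl
        · exact (hC1C h).2 hb1
      · calc ((B \ {b1}) ∪ C1).ncard ≤ (B \ {b1}).ncard + C1.ncard := Set.ncard_union_le _ _
        _ ≤ m := by
            rw [Set.ncard_diff (by simpa using hb1) (Set.finite_singleton b1),
              Set.ncard_singleton, hC1card]; omega
    · refine key _ b2 (Set.union_subset (Set.diff_subset.trans hBA)
        (Set.diff_subset.trans Set.diff_subset)) hb2 ?_ Set.subset_union_left ?_
      · rintro (h | h)
        · exact h.2 rfl
        · exact (Set.diff_subset h).2 hb2
      · calc ((B \ {b2}) ∪ ((A \ B) \ C1)).ncard ≤ (B \ {b2}).ncard + ((A \ B) \ C1).ncard :=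
            Set.ncard_union_le _ _
        _ ≤ m := by
            rw [Set.ncard_diff (by simpa using hb2) (Set.finite_singleton b2),
              Set.ncard_singleton, hC2card]; omega
  · push_neg at hcase
    have h2 : 1 < A.ncard := by omega
    obtain ⟨x, hx, y, hy, hxy⟩ := (Set.one_lt_ncard hA).1 h2
    refine ⟨A \ {x, y}, {x, y}, ?_, ?_, ?_⟩
    · intro a ha
      by_cases h : a ∈ ({x, y} : Set (Pn m))
      · exact Or.inr h
      · exact Or.inl ⟨ha, h⟩
    · exact hcase _ Set.diff_subset (by
        rw [Set.ncard_diff (s := {x, y}) (by simp [Set.insert_subset_iff, hx, hy])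
          ((Set.finite_singleton y).insert x), hcard, Set.ncard_pair hxy]; omega)
    · exact hcase _ (by simp [Set.insert_subset_iff, hx, hy])
        (by rw [Set.ncard_pair hxy]; omega)


/-- for `m ≥ 2` and `m + 2` points in linearly general position, the common
zero locus of the quadrics through `A` is exactly `A`. -/
theorem stmt_7 (m : ℕ) (hm : 2 ≤ m) (A : Set (Pn m)) (hA : A.Finite)
    (hcard : A.ncard = m + 2) (hlgp : LGP m A) :
    {p : Pn m | ∀ g ∈ homogeneousSubmodule (Fin (m + 1)) ℂ 2,
        (∀ a ∈ A, eval (Projectivization.rep a) g = 0) →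
          eval (Projectivization.rep p) g = 0} = A := by
  apply Set.Subset.antisymm
  · intro p hp
    simp only [Set.mem_setOf_eq] at hp
    by_contra hpA
    obtain ⟨A1, A2, hcover, h1, h2⟩ := exists_cover m hm A hA hcard hlgp p hpA
    obtain ⟨f1, hf1, hf1p⟩ := exists_functional _ _ h1
    obtain ⟨f2, hf2, hf2p⟩ := exists_functional _ _ h2
    have hg : linForm m f1 * linForm m f2 ∈ homogeneousSubmodule (Fin (m + 1)) ℂ 2 := by
      rw [mem_homogeneousSubmodule]
      exact (linForm_isHomogeneous m f1).mul (linForm_isHomogeneous m f2)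
    have hvan : ∀ a ∈ A, eval (Projectivization.rep a) (linForm m f1 * linForm m f2) = 0 := by
      intro a ha
      rw [eval_mul, eval_linForm, eval_linForm]
      rcases hcover ha with h | h
      · rw [hf1 _ (Submodule.subset_span (Set.mem_image_of_mem _ h)), zero_mul]
      · rw [hf2 _ (Submodule.subset_span (Set.mem_image_of_mem _ h)), mul_zero]
    have hz := hp _ hg hvan
    rw [eval_mul, eval_linForm, eval_linForm] at hz
    exact (mul_ne_zero hf1p hf2p) hz
  · intro a ha g hg hvan
    exact hvan a ha
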